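/- Single-crossing threshold lemma: let λ > 0, let 0 ≤ c < λ, and let f : [0,1] → ℝ be concave with 0 ≤ f(p) ≤ c·(1−p) for all p ∈ [0,1]. Then there exists a unique p° ∈ (0,1) such that λ(1−p°) = p° + f(p°); moreover, for every p ∈ [0,1], λ(1−p) ≤ p + f(p) if and only if p ≥ p°. In particular, min(λ(1−p), p + f(p)) = λ(1−p) exactly when p ≥ p°. -/

import Mathlib

private lemma concave_chord {g : ℝ → ℝ} (hg : ConcaveOn ℝ (Set.Icc (0:ℝ) 1) g)
    {x y : ℝ} (hx : x ∈ Set.Icc (0:ℝ) 1) (hxy : x ≤ y) (hy1 : y ≤ 1) (hx1 : x < 1) :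
    ((1-y)/(1-x)) * g x + ((y-x)/(1-x)) * g 1 ≤ g y := by
  have h1 : (1:ℝ) ∈ Set.Icc (0:ℝ) 1 := by norm_num
  have hd : (0:ℝ) < 1 - x := by linarith
  have ha : (0:ℝ) ≤ (1-y)/(1-x) := div_nonneg (by linarith) hd.le
  have hb : (0:ℝ) ≤ (y-x)/(1-x) := div_nonneg (by linarith) hd.le
  have hab : (1-y)/(1-x) + (y-x)/(1-x) = 1 := by
    rw [← add_div, div_eq_one_iff_eq hd.ne']; ring
  have := hg.2 hx h1 ha hb hab
  have hpt : ((1-y)/(1-x)) • x + ((y-x)/(1-x)) • (1:ℝ) = y := by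
    simp only [smul_eq_mul]
    rw [div_mul_eq_mul_div, div_mul_eq_mul_div, ← add_div, div_eq_iff hd.ne']
    ring
  rwa [hpt] at this

theorem stmt_13 (lam c : ℝ) (hlam : 0 < lam) (hc0 : 0 ≤ c) (hclam : c < lam)
    (f : ℝ → ℝ) (hconc : ConcaveOn ℝ (Set.Icc (0 : ℝ) 1) f)
    (hf : ∀ p ∈ Set.Icc (0 : ℝ) 1, 0 ≤ f p ∧ f p ≤ c * (1 - p)) :
    ∃ p0 ∈ Set.Ioo (0 : ℝ) 1,
      lam * (1 - p0) = p0 + f p0 ∧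
      (∀ q ∈ Set.Ioo (0 : ℝ) 1, lam * (1 - q) = q + f q → q = p0) ∧
      (∀ p ∈ Set.Icc (0 : ℝ) 1, (lam * (1 - p) ≤ p + f p ↔ p0 ≤ p)) ∧
      (∀ p ∈ Set.Icc (0 : ℝ) 1,
        (min (lam * (1 - p)) (p + f p) = lam * (1 - p) ↔ p0 ≤ p)) := by
  obtain ⟨g, hgdef⟩ : ∃ g : ℝ → ℝ, g = fun p => f p + ((1+lam)*p - lam) := ⟨_, rfl⟩
  have hgval : ∀ p, g p = p + f p - lam * (1 - p) := by intro p; rw [hgdef]; ring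
  have hlin : ConcaveOn ℝ (Set.Icc (0:ℝ) 1) (fun p => (1+lam)*p - lam) := by
    refine ⟨convex_Icc _ _, ?_⟩
    intro x hx y hy a b ha hb hab
    simp only [smul_eq_mul]
    nlinarith [hab]
  have hg : ConcaveOn ℝ (Set.Icc (0:ℝ) 1) g := hgdef ▸ hconc.add hlin
  have hf1 : f 1 = 0 := by
    have := hf 1 (by norm_num)
    have h2 := this.2
    nlinarith [this.1]
  have hg1 : 0 < g 1 := by rw [hgval, hf1]; nlinarith
  -- endpoints for IVT
  obtain ⟨a, hadef⟩ : ∃ a : ℝ, a = (lam - c) / (2*(1 + lam - c)) := ⟨_, rfl⟩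
  obtain ⟨b, hbdef⟩ : ∃ b : ℝ, b = (lam + 1/2) / (lam + 1) := ⟨_, rfl⟩
  have hden : (0:ℝ) < 1 + lam - c := by linarith
  have ha0 : 0 < a := by rw [hadef]; exact div_pos (by linarith) (by linarith)
  have hahalf : a < 1/2 := by
    rw [hadef, div_lt_iff₀ (by linarith)]; linarith
  have hbhalf : 1/2 ≤ b := by
    rw [hbdef, le_div_iff₀ (by linarith)]; linarith
  have hb1 : b < 1 := by
    rw [hbdef, div_lt_one (by linarith)]; linarith
  have hab : a < b := lt_of_lt_of_le hahalf hbhalf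
  have haI : a ∈ Set.Icc (0:ℝ) 1 := ⟨ha0.le, by linarith⟩
  have hbI : b ∈ Set.Icc (0:ℝ) 1 := ⟨by linarith, hb1.le⟩
  have hga : g a < 0 := by
    have := (hf a haI).2
    rw [hgval]
    have : f a ≤ c * (1 - a) := this
    have key : a + c*(1-a) - lam*(1-a) < 0 := by
      have : a * (1 + lam - c) = (lam - c)/2 := by
        rw [hadef]; field_simp
      nlinarith
    linarith
  have hgb : 0 < g b := by
    have := (hf b hbI).1
    rw [hgval]
    have key : 0 < b - lam*(1-b) := by
      have : b * (1 + lam) = lam + 1/2 := by rw [hbdef]; field_simp; ring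
      nlinarith
    linarith
  -- IVT
  have hcont : ContinuousOn g (Set.Icc a b) := by
    refine (hg.continuousOn_interior).mono ?_
    rw [interior_Icc]
    intro x hx; exact ⟨lt_of_lt_of_le ha0 hx.1, lt_of_le_of_lt hx.2 hb1⟩
  have hsub : Set.Icc (g a) (g b) ⊆ g '' Set.Icc a b :=
    intermediate_value_Icc hab.le hcont
  obtain ⟨p0, hp0mem, hp0⟩ := hsub ⟨hga.le, hgb.le⟩
  have hp0I : p0 ∈ Set.Ioo (0:ℝ) 1 :=
    ⟨lt_of_lt_of_le ha0 hp0mem.1, lt_of_le_of_lt hp0mem.2 hb1⟩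
  have hp0Icc : p0 ∈ Set.Icc (0:ℝ) 1 := ⟨hp0I.1.le, hp0I.2.le⟩
  -- key monotonic facts
  have hge : ∀ p ∈ Set.Icc (0:ℝ) 1, p0 ≤ p → 0 ≤ g p := by
    intro p hp hle
    have := concave_chord hg hp0Icc hle hp.2 hp0I.2
    have ha' : 0 ≤ (1-p)/(1-p0) := div_nonneg (by linarith [hp.2]) (by linarith [hp0I.2])
    have hb' : 0 ≤ (p-p0)/(1-p0) := div_nonneg (by linarith) (by linarith [hp0I.2])
    rw [hp0] at this
    have hx : 0 ≤ (p - p0) / (1 - p0) * g 1 := mul_nonneg hb' hg1.le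
    nlinarith [hx]
  have hgt : ∀ p ∈ Set.Icc (0:ℝ) 1, p0 < p → 0 < g p := by
    intro p hp hlt
    have := concave_chord hg hp0Icc hlt.le hp.2 hp0I.2
    have ha' : 0 ≤ (1-p)/(1-p0) := div_nonneg (by linarith [hp.2]) (by linarith [hp0I.2])
    have hb' : 0 < (p-p0)/(1-p0) := div_pos (by linarith) (by linarith [hp0I.2])
    rw [hp0] at this
    have hx : 0 < (p - p0) / (1 - p0) * g 1 := mul_pos hb' hg1
    nlinarith [hx]
  have hlt : ∀ p ∈ Set.Icc (0:ℝ) 1, p < p0 → g p < 0 := by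
    intro p hp hlt
    by_contra h
    push_neg at h
    have hch := concave_chord hg hp hlt.le hp0I.2.le (lt_of_lt_of_le hlt hp0I.2.le)
    have ha' : 0 ≤ (1-p0)/(1-p) := div_nonneg (by linarith [hp0I.2]) (by linarith [hp0I.2, hlt])
    have hb' : 0 < (p0-p)/(1-p) := div_pos (by linarith) (by linarith [hp0I.2, hlt])
    rw [hp0] at hch
    nlinarith [mul_nonneg ha' h, mul_pos hb' hg1]
  have hiff : ∀ p ∈ Set.Icc (0:ℝ) 1, (lam * (1 - p) ≤ p + f p ↔ p0 ≤ p) := by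
    intro p hp
    constructor
    · intro h
      by_contra hc'
      push_neg at hc'
      have := hlt p hp hc'
      rw [hgval] at this; linarith
    · intro h
      have := hge p hp h
      rw [hgval] at this; linarith
  refine ⟨p0, hp0I, ?_, ?_, hiff, ?_⟩
  · have := hgval p0; rw [hp0] at this; linarith
  · intro q hq heq
    have hgq : g q = 0 := by rw [hgval]; linarith
    rcases lt_trichotomy q p0 with h | h | h
    · exact absurd hgq (by have := hlt q ⟨hq.1.le, hq.2.le⟩ h; linarith)
    · exact h
    · exact absurd hgq (by have := hgt q ⟨hq.1.le, hq.2.le⟩ h; linarith)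
  · intro p hp
    rw [min_eq_left_iff]
    exact hiff p hp
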